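/- Let T ≥ 1 be an integer and let z, z' ∈ [0,1]^T satisfy z ⪰ z'. If μ ∈ [0,1] satisfies μ ≤ μ_{z'}, then Ψ(z,μ) ≥ Ψ(z',μ). -/

import Mathlib

open MeasureTheory Set

/-- Extended-real logarithm: `log ⊤ = ⊤`, `log x = -∞` for `x ≤ 0` (in particular `log 0 = -∞`). -/
noncomputable def elog (x : EReal) : EReal :=
  if x = ⊤ then ⊤ else if x ≤ 0 then ⊥ else ((Real.log x.toReal : ℝ) : EReal)

/-- Lower endpoint `-1/(1-μ)` of the betting interval, with the convention `1/0 = +∞`. -/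
noncomputable def betLower (μ : ℝ) : EReal := if μ = 1 then ⊥ else ((-(1 - μ)⁻¹ : ℝ) : EReal)

/-- Upper endpoint `1/μ` of the betting interval, with the convention `1/0 = +∞`. -/
noncomputable def betUpper (μ : ℝ) : EReal := if μ = 0 then ⊤ else ((μ⁻¹ : ℝ) : EReal)

/-- The betting interval `A_μ = [-1/(1-μ), 1/μ]` (as a set of extended reals). -/
noncomputable def betSet (μ : ℝ) : Set EReal := Set.Icc (betLower μ) (betUpper μ)

/-- `(1/T) ∑_t log(1 + α (z_t - μ))`, with EReal conventions (`0 * ±∞ = 0`, `log 0 = -∞`). -/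
noncomputable def betTerm {T : ℕ} (z : Fin T → ℝ) (μ : ℝ) (α : EReal) : EReal :=
  (((T : ℝ)⁻¹ : ℝ) : EReal) * ∑ t : Fin T, elog (1 + α * ((z t - μ : ℝ) : EReal))

/-- `Ψ(z, μ) = sup_{α ∈ A_μ} (1/T) ∑_t log(1 + α (z_t - μ))`. -/
noncomputable def Psi {T : ℕ} (z : Fin T → ℝ) (μ : ℝ) : EReal :=
  ⨆ α ∈ betSet μ, betTerm z μ α

/-- `μ_z = (1/T) ∑_t z_t`. -/
noncomputable def muz {T : ℕ} (z : Fin T → ℝ) : ℝ := (T : ℝ)⁻¹ * ∑ t, z t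

lemma coe_sum' {T : ℕ} (f : Fin T → ℝ) : ((∑ t, f t : ℝ) : EReal) = ∑ t, ((f t : ℝ) : EReal) :=
  map_sum (⟨⟨Real.toEReal, EReal.coe_zero⟩, EReal.coe_add⟩ : ℝ →+ EReal) f Finset.univ

lemma elog_mono : Monotone elog := by
  intro x y h
  unfold elog
  by_cases hy : y = ⊤
  · simp [hy]
  have hx : x ≠ ⊤ := fun hx => hy (top_le_iff.mp (hx ▸ h))
  rw [if_neg hy, if_neg hx]
  by_cases hx2 : x ≤ 0
  · simp [hx2]
  have hy2 : ¬ y ≤ 0 := fun hle => hx2 (h.trans hle)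
  rw [if_neg hx2, if_neg hy2]
  have hxb : x ≠ ⊥ := fun hb => hx2 (hb ▸ bot_le)
  have h0 : 0 < x.toReal := by
    have hc := EReal.coe_toReal hx hxb
    have : (0:EReal) < (x.toReal : EReal) := by rw [hc]; exact lt_of_not_ge hx2
    exact_mod_cast this
  exact EReal.coe_le_coe_iff.mpr (Real.log_le_log h0 (EReal.toReal_le_toReal h hxb hy))

lemma elog_one : elog 1 = 0 := by
  unfold elog
  have : ¬ ((1:EReal) ≤ 0) := by norm_num
  rw [if_neg (EReal.coe_one ▸ EReal.coe_ne_top 1), if_neg this]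
  norm_num

lemma elog_coe_le (x : ℝ) : elog (x : EReal) ≤ ((x - 1 : ℝ) : EReal) := by
  unfold elog
  split_ifs with h1 h2
  · simp at h1
  · exact bot_le
  · have hx : (0:ℝ) < x := by
      have := lt_of_not_ge h2
      exact_mod_cast this
    simp only [EReal.toReal_coe, EReal.coe_le_coe_iff]
    linarith [Real.log_le_sub_one_of_pos hx]

lemma betTerm_zero {T : ℕ} (z : Fin T → ℝ) (μ : ℝ) : betTerm z μ 0 = 0 := by
  unfold betTerm
  have : ∀ t : Fin T, elog (1 + (0:EReal) * ((z t - μ : ℝ) : EReal)) = 0 := by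
    intro t
    rw [zero_mul, add_zero, elog_one]
  rw [Finset.sum_congr rfl (fun t _ => this t)]
  simp

lemma zero_mem_betSet {μ : ℝ} (hμ : μ ∈ Set.Icc (0:ℝ) 1) : (0 : EReal) ∈ betSet μ := by
  constructor
  · unfold betLower
    split_ifs with h
    · exact bot_le
    · have : -(1 - μ)⁻¹ ≤ (0:ℝ) := by
        have : (0:ℝ) ≤ (1 - μ)⁻¹ := inv_nonneg.mpr (by linarith [hμ.2])
        linarith
      exact_mod_cast this
  · unfold betUpper
    split_ifs with h
    · exact le_top
    · have : (0:ℝ) ≤ μ⁻¹ := inv_nonneg.mpr hμ.1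
      exact_mod_cast this

/-- If `z ⪰ z'` (coordinatewise) with values in `[0,1]` and `μ ∈ [0,1]` with `μ ≤ μ_{z'}`,
then `Ψ(z, μ) ≥ Ψ(z', μ)`. -/
theorem psi_ge_of_ge {T : ℕ} (hT : 1 ≤ T) (z z' : Fin T → ℝ)
    (hz : ∀ t, z t ∈ Set.Icc (0 : ℝ) 1) (hz' : ∀ t, z' t ∈ Set.Icc (0 : ℝ) 1)
    (hord : ∀ t, z' t ≤ z t) (μ : ℝ) (hμ : μ ∈ Set.Icc (0 : ℝ) 1) (hμz : μ ≤ muz z') :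
    Psi z' μ ≤ Psi z μ := by
  have hTpos : (0:ℝ) < T := by exact_mod_cast hT
  have hPsi_ge : ∀ α ∈ betSet μ, betTerm z μ α ≤ Psi z μ := by
    intro α hα
    exact le_iSup₂_of_le α hα le_rfl
  have hzero : (0:EReal) ≤ Psi z μ := by
    have := hPsi_ge 0 (zero_mem_betSet hμ)
    rwa [betTerm_zero] at this
  rw [Psi]
  apply iSup₂_le
  intro α hα
  by_cases h0 : 0 ≤ α
  · -- monotone case
    refine le_trans ?_ (hPsi_ge α hα)
    unfold betTerm
    apply mul_le_mul_of_nonneg_left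
    · apply Finset.sum_le_sum
      intro t _
      apply elog_mono
      apply add_le_add_right
      apply mul_le_mul_of_nonneg_left _ h0
      exact_mod_cast sub_le_sub_right (hord t) μ
    · exact_mod_cast (inv_nonneg.mpr hTpos.le : (0:ℝ) ≤ (T:ℝ)⁻¹)
  · -- α < 0
    push_neg at h0
    refine le_trans ?_ hzero
    by_cases hμ1 : μ = 1
    · -- all z' t = 1
      subst hμ1
      have hall : ∀ t, z' t = 1 := by
        by_contra hc
        push_neg at hc
        obtain ⟨t0, ht0⟩ := hc
        have hlt : z' t0 < 1 := lt_of_le_of_ne (hz' t0).2 ht0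
        have hsum : ∑ t, z' t < ∑ t : Fin T, (1:ℝ) :=
          Finset.sum_lt_sum (fun t _ => (hz' t).2) ⟨t0, Finset.mem_univ t0, hlt⟩
        simp only [Finset.sum_const, Finset.card_univ, Fintype.card_fin, nsmul_eq_mul,
          mul_one] at hsum
        have : muz z' < 1 := by
          rw [muz]
          calc (T:ℝ)⁻¹ * ∑ t, z' t < (T:ℝ)⁻¹ * T :=
            (mul_lt_mul_iff_right₀ (inv_pos.mpr hTpos)).mpr hsum
          _ = 1 := inv_mul_cancel₀ hTpos.ne'
        linarith [hμz]
      have : betTerm z' 1 α = 0 := by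
        unfold betTerm
        have : ∀ t : Fin T, elog (1 + α * ((z' t - 1 : ℝ) : EReal)) = 0 := by
          intro t
          rw [hall t]
          norm_num [elog_one]
        rw [Finset.sum_congr rfl (fun t _ => this t)]
        simp
      rw [this]
    · -- μ < 1, α = coe a with -(1-μ)⁻¹ ≤ a < 0
      have hαbot : α ≠ ⊥ := by
        intro hb
        have := hα.1
        rw [hb, betLower, if_neg hμ1] at this
        exact (EReal.bot_lt_coe _).not_ge this
      have hαtop : α ≠ ⊤ := fun ht => by rw [ht] at h0; exact (le_top : (0:EReal) ≤ ⊤).not_gt h0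
      obtain ⟨a, rfl⟩ : ∃ a : ℝ, (a : EReal) = α := ⟨α.toReal, EReal.coe_toReal hαtop hαbot⟩
      have ha0 : a < 0 := by exact_mod_cast h0
      have hμlt : μ < 1 := lt_of_le_of_ne hμ.2 hμ1
      -- bound each term
      have hterm : ∀ t : Fin T, elog (1 + (a:EReal) * ((z' t - μ : ℝ) : EReal))
          ≤ ((a * (z' t - μ) : ℝ) : EReal) := by
        intro t
        have : (1 : EReal) + (a:EReal) * ((z' t - μ : ℝ) : EReal)
            = (((1 + a * (z' t - μ) : ℝ)) : EReal) := by
          rw [← EReal.coe_mul, ← EReal.coe_one, ← EReal.coe_add]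
        rw [this]
        have := elog_coe_le (1 + a * (z' t - μ))
        simpa using this
      unfold betTerm
      calc (((T:ℝ)⁻¹ : ℝ) : EReal) * ∑ t : Fin T, elog (1 + (a:EReal) * ((z' t - μ : ℝ) : EReal))
          ≤ (((T:ℝ)⁻¹ : ℝ) : EReal) * ∑ t : Fin T, ((a * (z' t - μ) : ℝ) : EReal) := by
            apply mul_le_mul_of_nonneg_left (Finset.sum_le_sum fun t _ => hterm t)
            exact_mod_cast (inv_nonneg.mpr hTpos.le : (0:ℝ) ≤ (T:ℝ)⁻¹)
        _ = (((T:ℝ)⁻¹ * ∑ t, a * (z' t - μ) : ℝ) : EReal) := by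
            rw [EReal.coe_mul, coe_sum']
        _ ≤ 0 := by
            rw [← EReal.coe_zero, EReal.coe_le_coe_iff]
            have hsum : ∑ t, a * (z' t - μ) = a * ((∑ t, z' t) - T * μ) := by
              simp only [mul_sub, Finset.sum_sub_distrib, Finset.mul_sum, Finset.sum_const,
                Finset.card_univ, Fintype.card_fin, nsmul_eq_mul]
              ring
            rw [hsum]
            have hge : (0:ℝ) ≤ (∑ t, z' t) - T * μ := by
              have : (T:ℝ) * μ ≤ (T:ℝ) * muz z' := by
                exact mul_le_mul_of_nonneg_left hμz hTpos.le
              rw [muz, ← mul_assoc, mul_inv_cancel₀ hTpos.ne', one_mul] at this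
              linarith
            have : a * ((∑ t, z' t) - T * μ) ≤ 0 := mul_nonpos_of_nonpos_of_nonneg ha0.le hge
            have hTinv : (0:ℝ) ≤ (T:ℝ)⁻¹ := inv_nonneg.mpr hTpos.le
            exact mul_nonpos_of_nonneg_of_nonpos hTinv this
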